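/- (Corollary 1) Let T be a linear map on d × d complex matrices such that ρ := (id ⊗ T)(|ψ⟩⟨ψ|) is positive semidefinite with trace 1 (as holds for any completely positive trace-preserving map T), and such that T maps positive semidefinite matrices to positive semidefinite matrices. Then the entanglement fidelity F(ψ; T)² := tr(|ψ⟩⟨ψ| · (id ⊗ T)(|ψ⟩⟨ψ|)) satisfies F(ψ; T)² ≥ Σ_{j=1}^d λ_j F(e_j; T)² + (1/d) Σ_{α=1}^d F(ψ_α; T)² − 1, where for a unit vector φ ∈ ℂ^d, F(φ; T)² := ⟨φ| T(|φ⟩⟨φ|) |φ⟩. -/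

import Mathlib

open Matrix Kronecker
open scoped BigOperators ComplexOrder

noncomputable section

/-- Standard basis vector `e_j` of `ℂ^d`. -/
def eVec (d : ℕ) (j : Fin d) : Fin d → ℂ := fun k => if k = j then 1 else 0

/-- Elementary tensor of two vectors in `ℂ^d`. -/
def tensorVec {d : ℕ} (v w : Fin d → ℂ) : Fin d × Fin d → ℂ := fun p => v p.1 * w p.2

/-- Outer product `|v⟩⟨w|`. -/
def outer {n : Type*} (v w : n → ℂ) : Matrix n n ℂ := Matrix.vecMulVec v (star w)

/-- Conjugate (mutually unbiased) basis vectors `â_α`. -/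
def ahat (d : ℕ) (phi : Fin d → Fin d → ℝ) (α : Fin d) : Fin d → ℂ :=
  fun j => ((1 / Real.sqrt d : ℝ) : ℂ) * Complex.exp (Complex.I * (phi j α : ℂ))

/-- The unit vectors `ψ_α = Σ_j √λ_j e^{-iφ(j,α)} e_j`. -/
def psiAlpha (d : ℕ) (lam : Fin d → ℝ) (phi : Fin d → Fin d → ℝ) (α : Fin d) : Fin d → ℂ :=
  fun j => ((Real.sqrt (lam j) : ℝ) : ℂ) * Complex.exp (-Complex.I * (phi j α : ℂ))

/-- The Schmidt-form state `ψ = Σ_j √λ_j e_j ⊗ e_j` in `ℂ^d ⊗ ℂ^d`. -/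
def psiVec (d : ℕ) (lam : Fin d → ℝ) : Fin d × Fin d → ℂ :=
  ∑ j, ((Real.sqrt (lam j) : ℝ) : ℂ) • tensorVec (eVec d j) (eVec d j)

/-- The projector `P = Σ_j |e_j⟩⟨e_j| ⊗ |e_j⟩⟨e_j|`. -/
def Pop (d : ℕ) : Matrix (Fin d × Fin d) (Fin d × Fin d) ℂ :=
  ∑ j, (outer (eVec d j) (eVec d j)) ⊗ₖ (outer (eVec d j) (eVec d j))

/-- The projector `Q = Σ_α |â_α⟩⟨â_α| ⊗ |ψ_α⟩⟨ψ_α|`. -/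
def Qop (d : ℕ) (lam : Fin d → ℝ) (phi : Fin d → Fin d → ℝ) :
    Matrix (Fin d × Fin d) (Fin d × Fin d) ℂ :=
  ∑ α, (outer (ahat d phi α) (ahat d phi α)) ⊗ₖ
      (outer (psiAlpha d lam phi α) (psiAlpha d lam phi α))

/-- The map `id ⊗ T` on operators on `ℂ^d ⊗ ℂ^d`, acting as the identity on the
first tensor factor and as `T` on the second; on product operators it satisfies
`(id ⊗ T)(A ⊗ B) = A ⊗ T(B)`. -/
def idTensor {d : ℕ} (T : Matrix (Fin d) (Fin d) ℂ →ₗ[ℂ] Matrix (Fin d) (Fin d) ℂ)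
    (M : Matrix (Fin d × Fin d) (Fin d × Fin d) ℂ) :
    Matrix (Fin d × Fin d) (Fin d × Fin d) ℂ :=
  Matrix.of fun p q => T (Matrix.of fun k l => M (p.1, k) (q.1, l)) p.2 q.2

/-- The ensemble fidelity `F(φ;T)² = ⟨φ|T(|φ⟩⟨φ|)|φ⟩` for a vector `φ ∈ ℂ^d`. -/
def ensFid {d : ℕ} (T : Matrix (Fin d) (Fin d) ℂ →ₗ[ℂ] Matrix (Fin d) (Fin d) ℂ)
    (v : Fin d → ℂ) : ℂ :=
  star v ⬝ᵥ (T (outer v v)).mulVec v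


section Aux
variable {d : ℕ} {lam : Fin d → ℝ} {phi : Fin d → Fin d → ℝ}

lemma psiVec_apply (p : Fin d × Fin d) :
    psiVec d lam p = if p.1 = p.2 then ((Real.sqrt (lam p.1) : ℝ) : ℂ) else 0 := by
  unfold psiVec tensorVec eVec
  rw [Finset.sum_apply]
  rcases eq_or_ne p.1 p.2 with h | h
  · rw [Finset.sum_eq_single p.1]
    · simp [h.symm, ← h]
    · intro j _ hj; simp [Pi.smul_apply, Ne.symm hj]
    · simp
  · rw [if_neg h]
    apply Finset.sum_eq_zero
    intro j _
    rcases eq_or_ne p.1 j with h1 | h1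
    · have h2 : p.2 ≠ j := fun h2 => h (h1.trans h2.symm)
      simp [Pi.smul_apply, h2]
    · simp [Pi.smul_apply, h1]

lemma Pop_apply (p q : Fin d × Fin d) :
    Pop d p q = if p.1 = p.2 ∧ q = p then 1 else 0 := by
  unfold Pop
  rw [Matrix.sum_apply]
  have hterm : ∀ j : Fin d,
      ((outer (eVec d j) (eVec d j)) ⊗ₖ (outer (eVec d j) (eVec d j))) p q
        = if p.1 = j then (if p.2 = j ∧ q.1 = j ∧ q.2 = j then (1:ℂ) else 0) else 0 := by
    intro j
    show (if p.1 = j then (1:ℂ) else 0) * star (if q.1 = j then (1:ℂ) else 0) *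
      ((if p.2 = j then (1:ℂ) else 0) * star (if q.2 = j then (1:ℂ) else 0)) = _
    split_ifs <;> simp_all
  simp only [hterm]
  rw [Finset.sum_ite_eq]
  simp only [Finset.mem_univ, if_true]
  exact if_congr (by rw [Prod.ext_iff]; constructor <;> (rintro ⟨a, b, c⟩) <;> refine ⟨?_, ?_, ?_⟩ <;> simp_all) rfl rfl

lemma Qop_apply (p q : Fin d × Fin d) :
    Qop d lam phi p q = ∑ α, ahat d phi α p.1 * star (ahat d phi α q.1) *
      (psiAlpha d lam phi α p.2 * star (psiAlpha d lam phi α q.2)) := by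
  unfold Qop
  rw [Matrix.sum_apply]
  apply Finset.sum_congr rfl
  intro α _
  rfl

-- star lemmas
lemma star_ahat (α j : Fin d) : star (ahat d phi α j)
    = ((1 / Real.sqrt d : ℝ) : ℂ) * Complex.exp (-Complex.I * (phi j α : ℂ)) := by
  unfold ahat
  rw [star_mul']
  rw [Complex.star_def, Complex.conj_ofReal, ← Complex.exp_conj]
  congr 2
  simp [Complex.conj_ofReal]

lemma star_psiAlpha (α j : Fin d) : star (psiAlpha d lam phi α j)
    = ((Real.sqrt (lam j) : ℝ) : ℂ) * Complex.exp (Complex.I * (phi j α : ℂ)) := by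
  unfold psiAlpha
  rw [star_mul']
  rw [Complex.star_def, Complex.conj_ofReal, ← Complex.exp_conj]
  congr 2
  simp [Complex.conj_ofReal]

-- rho entry
lemma rho_apply (T : Matrix (Fin d) (Fin d) ℂ →ₗ[ℂ] Matrix (Fin d) (Fin d) ℂ)
    (p q : Fin d × Fin d) :
    idTensor T (outer (psiVec d lam) (psiVec d lam)) p q
      = ((Real.sqrt (lam p.1) : ℝ) : ℂ) * ((Real.sqrt (lam q.1) : ℝ) : ℂ) *
        T (outer (eVec d p.1) (eVec d q.1)) p.2 q.2 := by
  show T (Matrix.of fun k l => outer (psiVec d lam) (psiVec d lam) (p.1, k) (q.1, l)) p.2 q.2 = _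
  have : (Matrix.of fun k l => outer (psiVec d lam) (psiVec d lam) (p.1, k) (q.1, l))
      = (((Real.sqrt (lam p.1) : ℝ) : ℂ) * ((Real.sqrt (lam q.1) : ℝ) : ℂ)) •
        outer (eVec d p.1) (eVec d q.1) := by
    ext k l
    simp only [Matrix.of_apply, Matrix.smul_apply, smul_eq_mul]
    rw [show outer (psiVec d lam) (psiVec d lam) (p.1, k) (q.1, l)
        = psiVec d lam (p.1, k) * star (psiVec d lam (q.1, l)) from rfl,
      psiVec_apply, psiVec_apply]
    show _ = _ * ((if k = p.1 then (1:ℂ) else 0) * star (if l = q.1 then (1:ℂ) else 0))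
    split_ifs with h1 h2 h3 h3 h2 h3 h3 <;>
      simp_all [eq_comm, Complex.star_def, Complex.conj_ofReal]
  rw [this, _root_.map_smul]
  simp

lemma hRow (hMUB : ∀ α β : Fin d,
      star (ahat d phi α) ⬝ᵥ ahat d phi β = if α = β then 1 else 0) (a b : Fin d) :
    ∑ α, ahat d phi α a * star (ahat d phi α b) = if a = b then 1 else 0 := by
  set U : Matrix (Fin d) (Fin d) ℂ := Matrix.of fun j α => ahat d phi α j with hUdef
  have hU : Uᴴ * U = 1 := by
    ext α β
    have := hMUB α β
    simpa [Matrix.mul_apply, Matrix.conjTranspose_apply, dotProduct, Matrix.one_apply,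
      hUdef] using this
  have hU' : U * Uᴴ = 1 := mul_eq_one_comm.mp hU
  have := congrArg (fun M : Matrix (Fin d) (Fin d) ℂ => M a b) hU'
  simpa [Matrix.mul_apply, Matrix.conjTranspose_apply, Matrix.one_apply, hUdef] using this

lemma ensFid_eVec (T : Matrix (Fin d) (Fin d) ℂ →ₗ[ℂ] Matrix (Fin d) (Fin d) ℂ) (j : Fin d) :
    ensFid T (eVec d j) = T (outer (eVec d j) (eVec d j)) j j := by
  unfold ensFid eVec
  simp [dotProduct, Matrix.mulVec, mul_comm]

lemma outer_eq_sum (v : Fin d → ℂ) :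
    outer v v = ∑ a, ∑ b, (v a * star (v b)) • outer (eVec d a) (eVec d b) := by
  ext k l
  simp only [Matrix.sum_apply, Matrix.smul_apply, smul_eq_mul]
  rw [Finset.sum_eq_single k]
  · rw [Finset.sum_eq_single l]
    · simp [outer, Matrix.vecMulVec_apply, eVec]
    · intro b _ hb; simp [outer, Matrix.vecMulVec_apply, eVec, Ne.symm hb]
    · simp
  · intro a _ ha
    apply Finset.sum_eq_zero
    intro b _
    simp [outer, Matrix.vecMulVec_apply, eVec, Ne.symm ha]
  · simp

lemma ensFid_expand (T : Matrix (Fin d) (Fin d) ℂ →ₗ[ℂ] Matrix (Fin d) (Fin d) ℂ)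
    (v : Fin d → ℂ) :
    ensFid T v = ∑ x, ∑ y, ∑ a, ∑ b,
      star (v x) * v y * (v a * star (v b)) * T (outer (eVec d a) (eVec d b)) x y := by
  unfold ensFid
  rw [outer_eq_sum, map_sum]
  simp only [map_sum, _root_.map_smul]
  simp only [dotProduct, Matrix.mulVec, dotProduct, Matrix.sum_apply, Matrix.smul_apply,
    smul_eq_mul, Pi.star_apply]
  congr 1; ext x
  rw [Finset.mul_sum]
  congr 1; ext y
  rw [Finset.sum_mul, Finset.mul_sum]
  congr 1; ext a
  rw [Finset.sum_mul, Finset.mul_sum]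
  congr 1; ext b
  ring

lemma trace_P_rho (hlam : ∀ j, 0 ≤ lam j)
    (T : Matrix (Fin d) (Fin d) ℂ →ₗ[ℂ] Matrix (Fin d) (Fin d) ℂ) :
    (Pop d * idTensor T (outer (psiVec d lam) (psiVec d lam))).trace
      = ∑ j, ((lam j : ℝ) : ℂ) * ensFid T (eVec d j) := by
  set ρ := idTensor T (outer (psiVec d lam) (psiVec d lam)) with hρdef
  have key : ∀ p : Fin d × Fin d, (∑ q, Pop d p q * ρ q p) = if p.1 = p.2 then ρ p p else 0 := by
    intro p
    rcases eq_or_ne p.1 p.2 with h | h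
    · rw [if_pos h, Finset.sum_eq_single p]
      · simp [Pop_apply, h]
      · intro q _ hq; simp [Pop_apply, hq]
      · simp
    · rw [if_neg h]
      apply Finset.sum_eq_zero
      intro q _
      simp [Pop_apply, h]
  have : (Pop d * ρ).trace = ∑ p : Fin d × Fin d, if p.1 = p.2 then ρ p p else 0 := by
    rw [Matrix.trace]
    apply Finset.sum_congr rfl
    intro p _
    rw [Matrix.diag_apply, Matrix.mul_apply, key]
  rw [this, Fintype.sum_prod_type]
  apply Finset.sum_congr rfl
  intro j _
  rw [Finset.sum_ite_eq]
  simp only [Finset.mem_univ, if_true]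
  rw [hρdef, rho_apply, ensFid_eVec, ← Complex.ofReal_mul, Real.mul_self_sqrt (hlam j)]

lemma sum4_perm (f : Fin d → Fin d → Fin d → Fin d → ℂ) :
    (∑ x, ∑ y, ∑ a, ∑ b, f x y a b) = ∑ b, ∑ y, ∑ a, ∑ x, f x y a b := by
  calc (∑ x, ∑ y, ∑ a, ∑ b, f x y a b)
      = ∑ x, ∑ y, ∑ b, ∑ a, f x y a b :=
        Finset.sum_congr rfl fun _ _ => Finset.sum_congr rfl fun _ _ => Finset.sum_comm
    _ = ∑ x, ∑ b, ∑ y, ∑ a, f x y a b :=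
        Finset.sum_congr rfl fun _ _ => Finset.sum_comm
    _ = ∑ b, ∑ x, ∑ y, ∑ a, f x y a b := Finset.sum_comm
    _ = ∑ b, ∑ y, ∑ x, ∑ a, f x y a b :=
        Finset.sum_congr rfl fun _ _ => Finset.sum_comm
    _ = ∑ b, ∑ y, ∑ a, ∑ x, f x y a b :=
        Finset.sum_congr rfl fun _ _ => Finset.sum_congr rfl fun _ _ => Finset.sum_comm

lemma exp_cancel (t : ℂ) : Complex.exp (Complex.I * t) * Complex.exp (-Complex.I * t) = 1 := by
  rw [← Complex.exp_add, show Complex.I * t + -Complex.I * t = 0 by ring, Complex.exp_zero]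

lemma trace_Q_rho (hd : 1 ≤ d)
    (T : Matrix (Fin d) (Fin d) ℂ →ₗ[ℂ] Matrix (Fin d) (Fin d) ℂ) :
    (Qop d lam phi * idTensor T (outer (psiVec d lam) (psiVec d lam))).trace
      = ∑ α, ((1/(d:ℝ) : ℝ) : ℂ) * ensFid T (psiAlpha d lam phi α) := by
  have hdd : ((1/(d:ℝ) : ℝ) : ℂ) = ((1/Real.sqrt d : ℝ) : ℂ) * ((1/Real.sqrt d : ℝ) : ℂ) := by
    rw [← Complex.ofReal_mul]
    congr 1
    rw [div_mul_div_comm, one_mul, Real.mul_self_sqrt (by positivity)]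
  set ρ := idTensor T (outer (psiVec d lam) (psiVec d lam)) with hρdef
  have step1 : (Qop d lam phi * ρ).trace
      = ∑ p : Fin d × Fin d, ∑ q : Fin d × Fin d, ∑ α,
          ahat d phi α p.1 * star (ahat d phi α q.1) *
            (psiAlpha d lam phi α p.2 * star (psiAlpha d lam phi α q.2)) * ρ q p := by
    rw [Matrix.trace]
    apply Finset.sum_congr rfl
    intro p _
    rw [Matrix.diag_apply, Matrix.mul_apply]
    apply Finset.sum_congr rfl
    intro q _
    rw [Qop_apply, Finset.sum_mul]
  rw [step1]
  rw [show (∑ p : Fin d × Fin d, ∑ q : Fin d × Fin d, ∑ α,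
      ahat d phi α p.1 * star (ahat d phi α q.1) *
        (psiAlpha d lam phi α p.2 * star (psiAlpha d lam phi α q.2)) * ρ q p)
    = ∑ α, ∑ p : Fin d × Fin d, ∑ q : Fin d × Fin d,
      ahat d phi α p.1 * star (ahat d phi α q.1) *
        (psiAlpha d lam phi α p.2 * star (psiAlpha d lam phi α q.2)) * ρ q p from by
      rw [show (∑ p : Fin d × Fin d, ∑ q : Fin d × Fin d, ∑ α,
          ahat d phi α p.1 * star (ahat d phi α q.1) *
            (psiAlpha d lam phi α p.2 * star (psiAlpha d lam phi α q.2)) * ρ q p)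
        = ∑ p : Fin d × Fin d, ∑ α, ∑ q : Fin d × Fin d,
          ahat d phi α p.1 * star (ahat d phi α q.1) *
            (psiAlpha d lam phi α p.2 * star (psiAlpha d lam phi α q.2)) * ρ q p from
        Finset.sum_congr rfl fun p _ => Finset.sum_comm]
      exact Finset.sum_comm]
  apply Finset.sum_congr rfl
  intro α _
  rw [ensFid_expand, sum4_perm]
  simp only [Fintype.sum_prod_type]
  simp only [Finset.mul_sum]
  apply Finset.sum_congr rfl; intro v1 _
  apply Finset.sum_congr rfl; intro v2 _
  apply Finset.sum_congr rfl; intro v3 _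
  apply Finset.sum_congr rfl; intro v4 _
  rw [hρdef, rho_apply]
  simp only [star_ahat, star_psiAlpha]
  show ((1 / Real.sqrt d : ℝ) : ℂ) * Complex.exp (Complex.I * (phi v1 α : ℂ)) *
      (((1 / Real.sqrt d : ℝ) : ℂ) * Complex.exp (-Complex.I * (phi v3 α : ℂ))) *
      (((Real.sqrt (lam v2) : ℝ) : ℂ) * Complex.exp (-Complex.I * (phi v2 α : ℂ)) *
        (((Real.sqrt (lam v4) : ℝ) : ℂ) * Complex.exp (Complex.I * (phi v4 α : ℂ)))) *
      (((Real.sqrt (lam v3) : ℝ) : ℂ) * ((Real.sqrt (lam v1) : ℝ) : ℂ) *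
        T (outer (eVec d v3) (eVec d v1)) v4 v2) = _
  rw [hdd]
  unfold psiAlpha
  ring

lemma sqrtd_mul_inv (hd : 1 ≤ d) :
    ((Real.sqrt d : ℝ) : ℂ) * ((1/Real.sqrt d : ℝ) : ℂ) = 1 := by
  have hdpos : (0:ℝ) < Real.sqrt d := Real.sqrt_pos.mpr (by exact_mod_cast Nat.lt_of_lt_of_le Nat.zero_lt_one hd)
  rw [← Complex.ofReal_mul, mul_one_div, div_self (ne_of_gt hdpos), Complex.ofReal_one]

lemma star_psiAlpha_eq_ahat (hd : 1 ≤ d) (α k : Fin d) :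
    star (psiAlpha d lam phi α k)
      = ((Real.sqrt (lam k) : ℝ) : ℂ) * ((Real.sqrt d : ℝ) : ℂ) * ahat d phi α k := by
  rw [star_psiAlpha]
  unfold ahat
  have hs : ((Real.sqrt d : ℝ) : ℂ) * ((1/Real.sqrt d : ℝ) : ℂ) = 1 := sqrtd_mul_inv hd
  linear_combination (-(((Real.sqrt (lam k) : ℝ) : ℂ) *
    Complex.exp (Complex.I * (phi k α : ℂ)))) * hs

lemma ahat_mul_psiAlpha (α j : Fin d) :
    ahat d phi α j * psiAlpha d lam phi α j
      = ((1/Real.sqrt d : ℝ) : ℂ) * ((Real.sqrt (lam j) : ℝ) : ℂ) := by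
  unfold ahat psiAlpha
  have hc := exp_cancel ((phi j α : ℝ) : ℂ)
  linear_combination (((1/Real.sqrt d : ℝ) : ℂ) * ((Real.sqrt (lam j) : ℝ) : ℂ)) * hc

lemma PQ_eq (hd : 1 ≤ d)
    (hMUB : ∀ α β : Fin d, star (ahat d phi α) ⬝ᵥ ahat d phi β = if α = β then 1 else 0) :
    Pop d * Qop d lam phi = outer (psiVec d lam) (psiVec d lam) := by
  ext p q
  rw [Matrix.mul_apply]
  rw [show outer (psiVec d lam) (psiVec d lam) p q
      = psiVec d lam p * star (psiVec d lam q) from rfl, psiVec_apply, psiVec_apply]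
  rcases eq_or_ne p.1 p.2 with h | h
  · rw [Finset.sum_eq_single p]
    · rw [show Pop d p p = 1 from by simp [Pop_apply, h], one_mul, Qop_apply]
      have key : ∀ α : Fin d, ahat d phi α p.1 * star (ahat d phi α q.1) *
          (psiAlpha d lam phi α p.2 * star (psiAlpha d lam phi α q.2))
          = (((1/Real.sqrt d : ℝ) : ℂ) * ((Real.sqrt (lam p.1) : ℝ) : ℂ) *
             (((Real.sqrt (lam q.2) : ℝ) : ℂ) * ((Real.sqrt d : ℝ) : ℂ))) *
            (ahat d phi α q.2 * star (ahat d phi α q.1)) := by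
        intro α
        have h1 := ahat_mul_psiAlpha (lam := lam) (phi := phi) α p.1
        have h2 := star_psiAlpha_eq_ahat (lam := lam) (phi := phi) hd α q.2
        rw [show p.2 = p.1 from h.symm]
        linear_combination (star (ahat d phi α q.1) * star (psiAlpha d lam phi α q.2)) * h1
          + (((1/Real.sqrt d : ℝ) : ℂ) * ((Real.sqrt (lam p.1) : ℝ) : ℂ) *
              star (ahat d phi α q.1)) * h2
      simp only [key]
      rw [← Finset.mul_sum, hRow hMUB q.2 q.1]
      have hs : ((1/Real.sqrt d : ℝ) : ℂ) * ((Real.sqrt d : ℝ) : ℂ) = 1 := by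
        rw [mul_comm]; exact sqrtd_mul_inv hd
      rcases eq_or_ne q.1 q.2 with hq | hq
      · rw [if_pos hq.symm, if_pos h, if_pos hq, mul_one]
        rw [show star (((Real.sqrt (lam q.1) : ℝ) : ℂ)) = ((Real.sqrt (lam q.1) : ℝ) : ℂ) from by
          rw [Complex.star_def, Complex.conj_ofReal]]
        rw [show q.2 = q.1 from hq.symm]
        linear_combination (((Real.sqrt (lam p.1) : ℝ) : ℂ) * ((Real.sqrt (lam q.1) : ℝ) : ℂ)) * hs
      · rw [if_neg fun hh => hq hh.symm, if_neg hq, mul_zero, star_zero, mul_zero]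
    · intro r _ hr
      rw [show Pop d p r = 0 from by simp [Pop_apply, hr], zero_mul]
    · simp
  · rw [if_neg h, zero_mul]
    apply Finset.sum_eq_zero
    intro r _
    rw [show Pop d p r = 0 from by simp [Pop_apply, h], zero_mul]

lemma hermP : (Pop d)ᴴ = Pop d := by
  ext p q
  simp only [Matrix.conjTranspose_apply, Pop_apply]
  split_ifs with h1 h2 h2 <;> simp_all [Prod.ext_iff]

lemma hermQ : (Qop d lam phi)ᴴ = Qop d lam phi := by
  ext p q
  simp only [Matrix.conjTranspose_apply, Qop_apply]
  rw [star_sum]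
  apply Finset.sum_congr rfl
  intro α _
  simp only [star_mul', star_star]
  ring

lemma hermPi : (outer (psiVec d lam) (psiVec d lam))ᴴ = outer (psiVec d lam) (psiVec d lam) := by
  ext p q
  simp only [Matrix.conjTranspose_apply]
  show star (psiVec d lam q * star (psiVec d lam p)) = psiVec d lam p * star (psiVec d lam q)
  rw [star_mul', star_star]
  exact mul_comm _ _

lemma PP_eq : Pop d * Pop d = Pop d := by
  ext p q
  rw [Matrix.mul_apply]
  rcases eq_or_ne p.1 p.2 with h | h
  · rw [Finset.sum_eq_single p]
    · rw [show Pop d p p = 1 from by simp [Pop_apply, h], one_mul]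
    · intro r _ hr; rw [show Pop d p r = 0 from by simp [Pop_apply, hr], zero_mul]
    · simp
  · rw [show Pop d p q = 0 from by simp [Pop_apply, h]]
    apply Finset.sum_eq_zero
    intro r _
    rw [show Pop d p r = 0 from by simp [Pop_apply, h], zero_mul]

lemma hMUB' (hMUB : ∀ α β : Fin d, star (ahat d phi α) ⬝ᵥ ahat d phi β = if α = β then 1 else 0)
    (α β : Fin d) : ∑ c, star (ahat d phi α c) * ahat d phi β c = if α = β then 1 else 0 := by
  have := hMUB α β
  simpa [dotProduct] using this

lemma psiAlpha_norm (hlam : ∀ j, 0 ≤ lam j) (hsum : ∑ j, lam j = 1) (α : Fin d) :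
    ∑ z, star (psiAlpha d lam phi α z) * psiAlpha d lam phi α z = 1 := by
  have : ∀ z : Fin d, star (psiAlpha d lam phi α z) * psiAlpha d lam phi α z = ((lam z : ℝ) : ℂ) := by
    intro z
    rw [star_psiAlpha]
    unfold psiAlpha
    have hc := exp_cancel ((phi z α : ℝ) : ℂ)
    have hm : ((Real.sqrt (lam z) : ℝ) : ℂ) * ((Real.sqrt (lam z) : ℝ) : ℂ) = ((lam z : ℝ) : ℂ) := by
      rw [← Complex.ofReal_mul, Real.mul_self_sqrt (hlam z)]
    linear_combination (((Real.sqrt (lam z) : ℝ) : ℂ) * ((Real.sqrt (lam z) : ℝ) : ℂ)) * hc + hm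
  rw [Finset.sum_congr rfl fun z _ => this z]
  rw [← Complex.ofReal_sum]
  rw [hsum, Complex.ofReal_one]

lemma QQ_eq (hlam : ∀ j, 0 ≤ lam j) (hsum : ∑ j, lam j = 1)
    (hMUB : ∀ α β : Fin d, star (ahat d phi α) ⬝ᵥ ahat d phi β = if α = β then 1 else 0) :
    Qop d lam phi * Qop d lam phi = Qop d lam phi := by
  ext p q
  rw [Matrix.mul_apply, Qop_apply]
  have step : ∀ r : Fin d × Fin d, Qop d lam phi p r * Qop d lam phi r q
      = ∑ α, ∑ β, (ahat d phi α p.1 * star (ahat d phi β q.1) *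
          (psiAlpha d lam phi α p.2 * star (psiAlpha d lam phi β q.2))) *
            ((star (ahat d phi α r.1) * ahat d phi β r.1) *
             (star (psiAlpha d lam phi α r.2) * psiAlpha d lam phi β r.2)) := by
    intro r
    rw [Qop_apply, Qop_apply, Finset.sum_mul_sum]
    apply Finset.sum_congr rfl; intro α _
    apply Finset.sum_congr rfl; intro β _
    ring
  simp only [step]
  rw [show (∑ r : Fin d × Fin d, ∑ α, ∑ β, (ahat d phi α p.1 * star (ahat d phi β q.1) *
      (psiAlpha d lam phi α p.2 * star (psiAlpha d lam phi β q.2))) *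
        ((star (ahat d phi α r.1) * ahat d phi β r.1) *
         (star (psiAlpha d lam phi α r.2) * psiAlpha d lam phi β r.2)))
    = ∑ α, ∑ β, ∑ r : Fin d × Fin d, (ahat d phi α p.1 * star (ahat d phi β q.1) *
      (psiAlpha d lam phi α p.2 * star (psiAlpha d lam phi β q.2))) *
        ((star (ahat d phi α r.1) * ahat d phi β r.1) *
         (star (psiAlpha d lam phi α r.2) * psiAlpha d lam phi β r.2)) from by
      rw [Finset.sum_comm]
      exact Finset.sum_congr rfl fun α _ => Finset.sum_comm]
  apply Finset.sum_congr rfl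
  intro α _
  rw [Finset.sum_eq_single α]
  · rw [show (∑ r : Fin d × Fin d, (ahat d phi α p.1 * star (ahat d phi α q.1) *
      (psiAlpha d lam phi α p.2 * star (psiAlpha d lam phi α q.2))) *
        ((star (ahat d phi α r.1) * ahat d phi α r.1) *
         (star (psiAlpha d lam phi α r.2) * psiAlpha d lam phi α r.2)))
      = (ahat d phi α p.1 * star (ahat d phi α q.1) *
         (psiAlpha d lam phi α p.2 * star (psiAlpha d lam phi α q.2))) *
        ((∑ c, star (ahat d phi α c) * ahat d phi α c) *
         (∑ z, star (psiAlpha d lam phi α z) * psiAlpha d lam phi α z)) from by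
        rw [Fintype.sum_prod_type]
        rw [Finset.sum_mul_sum]
        simp only [Finset.mul_sum]]
    rw [hMUB' hMUB α α, psiAlpha_norm hlam hsum, if_pos rfl, one_mul, mul_one]
  · intro β _ hβ
    rw [show (∑ r : Fin d × Fin d, (ahat d phi α p.1 * star (ahat d phi β q.1) *
      (psiAlpha d lam phi α p.2 * star (psiAlpha d lam phi β q.2))) *
        ((star (ahat d phi α r.1) * ahat d phi β r.1) *
         (star (psiAlpha d lam phi α r.2) * psiAlpha d lam phi β r.2)))
      = (ahat d phi α p.1 * star (ahat d phi β q.1) *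
         (psiAlpha d lam phi α p.2 * star (psiAlpha d lam phi β q.2))) *
        ((∑ c, star (ahat d phi α c) * ahat d phi β c) *
         (∑ z, star (psiAlpha d lam phi α z) * psiAlpha d lam phi β z)) from by
        rw [Fintype.sum_prod_type]
        rw [Finset.sum_mul_sum]
        simp only [Finset.mul_sum]]
    rw [hMUB' hMUB α β, if_neg (fun hh => hβ hh.symm)]
    simp
  · simp

lemma trace_psd_mul_nonneg {n : Type*} [Fintype n] [DecidableEq n] {A B : Matrix n n ℂ}
    (hA : A.PosSemidef) (hB : B.PosSemidef) : 0 ≤ (A * B).trace := by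
  have hC : ∃ C : Matrix n n ℂ, A = Cᴴ * C := by
    open scoped MatrixOrder in
    exact ⟨CFC.sqrt A, by rw [← Matrix.star_eq_conjTranspose,
      (IsSelfAdjoint.of_nonneg (CFC.sqrt_nonneg A)).star_eq, CFC.sqrt_mul_sqrt_self A hA.nonneg]⟩
  obtain ⟨C, rfl⟩ := hC
  rw [Matrix.mul_assoc, Matrix.trace_mul_comm]
  have h := hB.mul_mul_conjTranspose_same C
  exact h.trace_nonneg

end Aux

/-- Corollary 1: the entanglement fidelity of `T` with respect to `ψ`
is bounded below by the ensemble fidelities,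
`F(ψ;T)² ≥ Σ_j λ_j F(e_j;T)² + (1/d) Σ_α F(ψ_α;T)² − 1`. -/
theorem stmt10 (d : ℕ) (hd : 1 ≤ d) (lam : Fin d → ℝ)
    (hlam : ∀ j, 0 ≤ lam j) (hsum : ∑ j, lam j = 1)
    (phi : Fin d → Fin d → ℝ)
    (hMUB : ∀ α β : Fin d,
      star (ahat d phi α) ⬝ᵥ ahat d phi β = if α = β then 1 else 0)
    (T : Matrix (Fin d) (Fin d) ℂ →ₗ[ℂ] Matrix (Fin d) (Fin d) ℂ)
    (hρ : (idTensor T (outer (psiVec d lam) (psiVec d lam))).PosSemidef)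
    (hρtr : (idTensor T (outer (psiVec d lam) (psiVec d lam))).trace = 1)
    (hTpos : ∀ A : Matrix (Fin d) (Fin d) ℂ, A.PosSemidef → (T A).PosSemidef) :
    (outer (psiVec d lam) (psiVec d lam) *
        idTensor T (outer (psiVec d lam) (psiVec d lam))).trace.re ≥
      (∑ j, lam j * (ensFid T (eVec d j)).re)
      + (1 / (d : ℝ)) * (∑ α, (ensFid T (psiAlpha d lam phi α)).re)
      - 1 := by
  classical
  set ρ := idTensor T (outer (psiVec d lam) (psiVec d lam)) with hρdef
  set Pi' := outer (psiVec d lam) (psiVec d lam) with hPidef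
  set P := Pop d with hPdef
  set Q := Qop d lam phi with hQdef
  have f1 : P * Q = Pi' := PQ_eq hd hMUB
  have f3 : P * P = P := PP_eq
  have f4 : Q * Q = Q := QQ_eq hlam hsum hMUB
  have f2 : Q * P = Pi' := by
    have := congrArg Matrix.conjTranspose f1
    rwa [Matrix.conjTranspose_mul, hermP, hermQ, hermPi] at this
  have hPPi : P * Pi' = Pi' := by rw [← f1, ← Matrix.mul_assoc, f3]
  have hPiP : Pi' * P = Pi' := by rw [← f2, Matrix.mul_assoc, f3]
  have hQPi : Q * Pi' = Pi' := by rw [← f2, ← Matrix.mul_assoc, f4]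
  have hPiQ : Pi' * Q = Pi' := by rw [← f1, Matrix.mul_assoc, f4]
  have hPiPi : Pi' * Pi' = Pi' := by
    rw [← f1, Matrix.mul_assoc, ← Matrix.mul_assoc Q P Q, f2, hPiQ, hPPi]
    exact f1.symm
  set M : Matrix (Fin d × Fin d) (Fin d × Fin d) ℂ := 1 - P - Q + Pi' with hMdef
  have hPM : P * M = 0 := by
    rw [hMdef, Matrix.mul_add, Matrix.mul_sub, Matrix.mul_sub, Matrix.mul_one, f3, f1, hPPi]
    abel
  have hQM : Q * M = 0 := by
    rw [hMdef, Matrix.mul_add, Matrix.mul_sub, Matrix.mul_sub, Matrix.mul_one, f2, f4, hQPi]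
    abel
  have hPiM : Pi' * M = 0 := by
    rw [hMdef, Matrix.mul_add, Matrix.mul_sub, Matrix.mul_sub, Matrix.mul_one, hPiP, hPiQ, hPiPi]
    abel
  have hMM : M * M = M := by
    calc M * M = 1 * M - P * M - Q * M + Pi' * M := by
          rw [hMdef]
          rw [Matrix.add_mul, Matrix.sub_mul, Matrix.sub_mul]
      _ = M := by rw [hPM, hQM, hPiM, Matrix.one_mul]; abel
  have hMH : Mᴴ = M := by
    rw [hMdef]
    rw [Matrix.conjTranspose_add, Matrix.conjTranspose_sub, Matrix.conjTranspose_sub,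
      Matrix.conjTranspose_one, hermP, hermQ, hermPi]
  have hMpsd : M.PosSemidef := by
    have : M = Mᴴ * M := by rw [hMH, hMM]
    rw [this]
    exact Matrix.posSemidef_conjTranspose_mul_self M
  have h0 : 0 ≤ (M * ρ).trace := trace_psd_mul_nonneg hMpsd hρ
  have hsplit : (M * ρ).trace
      = ρ.trace - (P * ρ).trace - (Q * ρ).trace + (Pi' * ρ).trace := by
    rw [hMdef, Matrix.add_mul, Matrix.sub_mul, Matrix.sub_mul, Matrix.one_mul,
      Matrix.trace_add, Matrix.trace_sub, Matrix.trace_sub]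
  rw [hsplit, hρtr, hPdef, hρdef, trace_P_rho hlam T, hQdef, trace_Q_rho hd T] at h0
  have h0re := (Complex.le_def.mp h0).1
  simp only [Complex.zero_re, Complex.add_re, Complex.sub_re, Complex.one_re,
    Complex.re_sum, Complex.re_ofReal_mul] at h0re
  have hd2 : ∑ α, (1/(d:ℝ)) * (ensFid T (psiAlpha d lam phi α)).re
      = (1/(d:ℝ)) * ∑ α, (ensFid T (psiAlpha d lam phi α)).re := by
    rw [Finset.mul_sum]
  rw [ge_iff_le]
  rw [← hd2]
  linarith [h0re]
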